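/- Let G be a group that is the central product decomposition candidate: suppose G is nilpotent, Z(G) its center, and Z(G) = D₀ ⊕ F₀ where D₀ is divisible and F₀ has exponent m. Let A ≤ G be a normal subgroup containing Z(G) such that A/Z(G) is divisible. Then the set D = A^{2m} · D₀ = {a^{2m} d : a ∈ A, d ∈ D₀} is a divisible normal subgroup of G. -/

import Mathlib

open scoped commutatorElement

section Core

variable {H : Type*} [Group H]




/-- commutator with a central right factor -/
private lemma comm_mul_central (a b c : H) (hc : ∀ x, c * x = x * c) :
    ⁅a, b * c⁆ = ⁅a, b⁆ := by
  simp only [commutatorElement_def, mul_inv_rev]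
  have h1 : c * a⁻¹ = a⁻¹ * c := hc a⁻¹
  calc a * (b * c) * a⁻¹ * (c⁻¹ * b⁻¹)
      = a * b * (c * a⁻¹ * c⁻¹) * b⁻¹ := by group
    _ = a * b * (a⁻¹ * c * c⁻¹) * b⁻¹ := by rw [h1]
    _ = a * b * a⁻¹ * b⁻¹ := by group

/-- commutator with a power, when the commutator is central -/
private lemma comm_pow_central (a b : H) (k : ℕ) (hc : ∀ x, ⁅a, b⁆ * x = x * ⁅a, b⁆) :
    ⁅a, b ^ k⁆ = ⁅a, b⁆ ^ k := by
  set c := ⁅a, b⁆ with hcdef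
  have hab : a * b = c * (b * a) := by rw [hcdef]; group
  have key : ∀ j : ℕ, a * b ^ j = c ^ j * (b ^ j * a) := by
    intro j
    induction j with
    | zero => simp
    | succ j ih =>
      calc a * b ^ (j + 1) = (a * b ^ j) * b := by rw [pow_succ, mul_assoc]
        _ = c ^ j * (b ^ j * (a * b)) := by rw [ih]; group
        _ = c ^ j * (b ^ j * (c * (b * a))) := by rw [hab]
        _ = c ^ j * ((b ^ j * c) * (b * a)) := by group
        _ = c ^ j * ((c * b ^ j) * (b * a)) := by rw [← hc (b ^ j)]
        _ = c ^ (j + 1) * (b ^ (j + 1) * a) := by rw [pow_succ, pow_succ]; group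
  have h2 : ⁅a, b ^ k⁆ = a * b ^ k * a⁻¹ * (b ^ k)⁻¹ := commutatorElement_def _ _
  rw [h2, key k]
  group




private lemma lcs_succ (j : ℕ) :
    Subgroup.lowerCentralSeries (⊤ : Subgroup H) (j + 1) = ⁅Subgroup.lowerCentralSeries (⊤ : Subgroup H) j, (⊤ : Subgroup H)⁆ := by
  rw [lowerCentralSeries_succ, Subgroup.commutator_def]

/-- image of `lowerCentralSeries H j` is central in `H ⧸ lowerCentralSeries H (j+1)` -/
private lemma central_image (j : ℕ) (g : H) (hg : g ∈ Subgroup.lowerCentralSeries (⊤ : Subgroup H) j)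
    (x : H ⧸ Subgroup.lowerCentralSeries (⊤ : Subgroup H) (j + 1)) :
    (QuotientGroup.mk' _ g) * x = x * (QuotientGroup.mk' _ g) := by
  induction x using QuotientGroup.induction_on with
  | H h =>
    have hcomm : ⁅g, h⁆ ∈ Subgroup.lowerCentralSeries (⊤ : Subgroup H) (j + 1) := by
      rw [lcs_succ]
      exact Subgroup.commutator_mem_commutator hg (Subgroup.mem_top h)
    have h1 : (QuotientGroup.mk' (Subgroup.lowerCentralSeries (⊤ : Subgroup H) (j+1)) ⁅g, h⁆) = 1 := by
      rw [QuotientGroup.mk'_apply, QuotientGroup.eq_one_iff]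
      exact hcomm
    rw [map_commutatorElement] at h1
    have := commutatorElement_eq_one_iff_commute.mp h1
    exact this.eq

/-- merge: the defect of multiplying n-th powers drops one level down the LCS -/
private lemma merge_lemma (n j : ℕ) (q y : H) (hy : y ∈ Subgroup.lowerCentralSeries (⊤ : Subgroup H) j) :
    ((q * y) ^ n)⁻¹ * (q ^ n * y ^ n) ∈ Subgroup.lowerCentralSeries (⊤ : Subgroup H) (j + 1) := by
  set N := Subgroup.lowerCentralSeries (⊤ : Subgroup H) (j + 1)
  rw [← QuotientGroup.eq_one_iff (N := N)]
  set π := QuotientGroup.mk' N with hπ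
  have hcomm : Commute (π q) (π y) := by
    exact (central_image j y hy (π q)).symm
  have : ((π q) * (π y)) ^ n = (π q) ^ n * (π y) ^ n := hcomm.mul_pow n
  show (QuotientGroup.mk (((q * y) ^ n)⁻¹ * (q ^ n * y ^ n)) : H ⧸ N) = 1
  have hmaps : (QuotientGroup.mk (((q * y) ^ n)⁻¹ * (q ^ n * y ^ n)) : H ⧸ N)
      = (π ((q * y) ^ n))⁻¹ * (π (q ^ n) * π (y ^ n)) := by
    simp [hπ, QuotientGroup.mk'_apply]
  rw [hmaps]
  simp only [map_pow, map_mul]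
  rw [← this]
  simp [map_mul]


/-- central elements have central images in any quotient -/
private lemma central_quot_image {N : Subgroup H} [N.Normal] (z : H)
    (hz : z ∈ Subgroup.center H) (x : H ⧸ N) :
    (QuotientGroup.mk' N z) * x = x * (QuotientGroup.mk' N z) := by
  induction x using QuotientGroup.induction_on with
  | H h =>
    have : z * h = h * z := (Subgroup.mem_center_iff.mp hz h).symm
    rw [QuotientGroup.mk'_apply]
    rw [show ((z : H ⧸ N) * (h : H ⧸ N)) = ((z * h : H) : H ⧸ N) from rfl]
    rw [this]
    rfl

/-- every element of a LCS level is an n-th power times an element one level deeper -/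
private lemma root_lemma (n : ℕ)
    (div : ∀ v : H, ∃ w : H, ∃ z ∈ Subgroup.center H, w ^ n = v * z)
    (j : ℕ) (x : H) (hx : x ∈ Subgroup.lowerCentralSeries (⊤ : Subgroup H) (j + 1)) :
    ∃ y ∈ Subgroup.lowerCentralSeries (⊤ : Subgroup H) (j + 1), ∃ x' ∈ Subgroup.lowerCentralSeries (⊤ : Subgroup H) (j + 1 + 1),
      x = y ^ n * x' := by
  set N := Subgroup.lowerCentralSeries (⊤ : Subgroup H) (j + 1 + 1) with hN
  set π := QuotientGroup.mk' N with hπ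
  have claim : ∃ y ∈ Subgroup.lowerCentralSeries (⊤ : Subgroup H) (j + 1), π x = (π y) ^ n := by
    rw [lcs_succ j, Subgroup.commutator_def] at hx
    induction hx using Subgroup.closure_induction with
    | mem g hg =>
      obtain ⟨u, hu, w, -, hgc⟩ := hg
      obtain ⟨w₁, z, hz, hw⟩ := div w
      have hwz : w = w₁ ^ n * z⁻¹ := by rw [hw]; group
      have hy_mem : ⁅u, w₁⁆ ∈ Subgroup.lowerCentralSeries (⊤ : Subgroup H) (j + 1) := by
        rw [lcs_succ j]
        exact Subgroup.commutator_mem_commutator hu (Subgroup.mem_top w₁)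
      refine ⟨⁅u, w₁⁆, hy_mem, ?_⟩
      have hzc : ∀ x : H ⧸ N, (π z)⁻¹ * x = x * (π z)⁻¹ := by
        intro x
        have h1 := central_quot_image (N := N) z hz x⁻¹
        calc (π z)⁻¹ * x = ((x⁻¹) * (π z))⁻¹ := by group
          _ = ((π z) * (x⁻¹))⁻¹ := by rw [← h1]
          _ = x * (π z)⁻¹ := by group
      have hcc : ∀ t : H ⧸ N, ⁅π u, π w₁⁆ * t = t * ⁅π u, π w₁⁆ := by
        intro t
        rw [← map_commutatorElement]
        exact central_image (j + 1) ⁅u, w₁⁆ hy_mem t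
      calc π g = π ⁅u, w⁆ := by rw [hgc]
        _ = ⁅π u, π w⁆ := map_commutatorElement _ _ _
        _ = ⁅π u, (π w₁) ^ n * (π z)⁻¹⁆ := by rw [hwz]; simp [map_mul, map_pow, map_inv]
        _ = ⁅π u, (π w₁) ^ n⁆ := comm_mul_central _ _ _ hzc
        _ = ⁅π u, π w₁⁆ ^ n := comm_pow_central _ _ n hcc
        _ = (π ⁅u, w₁⁆) ^ n := by rw [map_commutatorElement]
    | one => exact ⟨1, Subgroup.one_mem _, by simp⟩
    | mul g₁ g₂ hg₁ hg₂ ih₁ ih₂ =>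
      obtain ⟨y₁, hy₁, he₁⟩ := ih₁
      obtain ⟨y₂, hy₂, he₂⟩ := ih₂
      refine ⟨y₁ * y₂, Subgroup.mul_mem _ hy₁ hy₂, ?_⟩
      have hcomm : Commute (π y₁) (π y₂) := central_image (j + 1) y₁ hy₁ (π y₂)
      rw [map_mul, map_mul, he₁, he₂, ← hcomm.mul_pow]
    | inv g hg ih =>
      obtain ⟨y, hy, he⟩ := ih
      exact ⟨y⁻¹, Subgroup.inv_mem _ hy, by rw [map_inv, map_inv, he, inv_pow]⟩
  obtain ⟨y, hy, he⟩ := claim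
  refine ⟨y, hy, (y ^ n)⁻¹ * x, ?_, by group⟩
  rw [← QuotientGroup.eq_one_iff (N := N)]
  show π ((y ^ n)⁻¹ * x) = 1
  rw [map_mul, map_inv, map_pow, ← he]
  group


private lemma rec_lemma (n : ℕ)
    (div : ∀ v : H, ∃ w : H, ∃ z ∈ Subgroup.center H, w ^ n = v * z) :
    ∀ (t j : ℕ), Subgroup.lowerCentralSeries (⊤ : Subgroup H) (j + 1 + t) = ⊥ →
      ∀ (q x : H), x ∈ Subgroup.lowerCentralSeries (⊤ : Subgroup H) (j + 1) →
        ∃ h : H, h ^ n = q ^ n * x := by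
  intro t
  induction t with
  | zero =>
    intro j hbot q x hx
    rw [Nat.add_zero] at hbot
    rw [hbot, Subgroup.mem_bot] at hx
    exact ⟨q, by rw [hx, mul_one]⟩
  | succ t ih =>
    intro j hbot q x hx
    obtain ⟨y, hy, x', hx', hxe⟩ := root_lemma n div j x hx
    have hΞ := merge_lemma n (j + 1) q y hy
    set Ξ := ((q * y) ^ n)⁻¹ * (q ^ n * y ^ n) with hΞdef
    have heq : q ^ n * x = (q * y) ^ n * (Ξ * x') := by
      rw [hxe, hΞdef]; group
    have hmem : Ξ * x' ∈ Subgroup.lowerCentralSeries (⊤ : Subgroup H) (j + 1 + 1) :=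
      Subgroup.mul_mem _ hΞ hx'
    have hbot' : Subgroup.lowerCentralSeries (⊤ : Subgroup H) (j + 1 + 1 + t) = ⊥ := by
      rw [show j + 1 + 1 + t = j + 1 + (t + 1) by omega]
      exact hbot
    obtain ⟨h, hh⟩ := ih (j + 1) hbot' (q * y) (Ξ * x') hmem
    exact ⟨h, by rw [hh, heq]⟩

/-- Core theorem: in a nilpotent group where every element has an n-th root
modulo the centre, a product of two n-th powers is an n-th power. -/
private lemma core_pow_mul [Group.IsNilpotent H] (n : ℕ)
    (div : ∀ v : H, ∃ w : H, ∃ z ∈ Subgroup.center H, w ^ n = v * z)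
    (a b : H) : ∃ h : H, h ^ n = a ^ n * b ^ n := by
  obtain ⟨c, hc⟩ := Subgroup.nilpotent_iff_lowerCentralSeries.mp ‹_›
  have hx0 : ((a * b) ^ n)⁻¹ * (a ^ n * b ^ n) ∈ Subgroup.lowerCentralSeries (⊤ : Subgroup H) (0 + 1) :=
    merge_lemma n 0 a b (by simp [Subgroup.lowerCentralSeries_zero])
  have hbot : Subgroup.lowerCentralSeries (⊤ : Subgroup H) (0 + 1 + c) = ⊥ := by
    have h1 : Subgroup.lowerCentralSeries (⊤ : Subgroup H) (0 + 1 + c) ≤ Subgroup.lowerCentralSeries (⊤ : Subgroup H) c :=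
      Subgroup.lowerCentralSeries_antitone _ (by omega)
    rw [hc] at h1
    exact le_bot_iff.mp h1
  obtain ⟨h, hh⟩ := rec_lemma n div c 0 hbot (a * b) _ hx0
  exact ⟨h, by rw [hh]; group⟩

end Core

/-- If `G` is nilpotent with centre `Z(G) = D₀ ⊕ F₀`, `D₀` divisible and `F₀` of exponent `m`,
and `A` is a normal subgroup containing the centre with `A/Z(G)` divisible, then the set
`D = A^{2m} · D₀` is a divisible normal subgroup of `G`. -/
theorem stmt_13 {G : Type*} [Group G] [Group.IsNilpotent G]
    (D₀ F₀ : Subgroup G) (m : ℕ) (hm : 0 < m)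
    (hD₀c : D₀ ≤ Subgroup.center G) (hF₀c : F₀ ≤ Subgroup.center G)
    (hdisj : D₀ ⊓ F₀ = ⊥)
    (hsum : ∀ z ∈ Subgroup.center G, ∃ d ∈ D₀, ∃ f ∈ F₀, z = d * f)
    (hD₀div : ∀ d ∈ D₀, ∀ k : ℕ, 0 < k → ∃ e ∈ D₀, e ^ k = d)
    (hF₀exp : ∀ f ∈ F₀, f ^ m = 1)
    (A : Subgroup G) (hA : A.Normal) (hZA : Subgroup.center G ≤ A)
    (hAdiv : ∀ a ∈ A, ∀ k : ℕ, 0 < k →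
      ∃ b ∈ A, ∃ z ∈ Subgroup.center G, b ^ k = a * z) :
    ∃ D : Subgroup G,
      (D : Set G) = {x : G | ∃ a ∈ A, ∃ d ∈ D₀, x = a ^ (2 * m) * d} ∧
      D.Normal ∧
      (∀ x ∈ D, ∀ k : ℕ, 0 < k → ∃ y ∈ D, y ^ k = x) := by
  haveI : Group.IsNilpotent ↥A := Subgroup.isNilpotent A
  -- the key closure property: a product of two 2m-th powers of A is a 2m-th power of A
  have hclosed : ∀ a ∈ A, ∀ b ∈ A, ∃ c ∈ A,
      c ^ (2 * m) = a ^ (2 * m) * b ^ (2 * m) := by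
    intro a ha b hb
    have div : ∀ v : ↥A, ∃ w : ↥A, ∃ z ∈ Subgroup.center ↥A, w ^ (2 * m) = v * z := by
      intro v
      obtain ⟨bb, hbb, z, hz, hbk⟩ := hAdiv v.1 v.2 (2 * m) (by positivity)
      refine ⟨⟨bb, hbb⟩, ⟨z, hZA hz⟩, ?_, ?_⟩
      · rw [Subgroup.mem_center_iff]
        intro g
        exact Subtype.ext (Subgroup.mem_center_iff.mp hz g.1)
      · apply Subtype.ext
        simpa using hbk
    obtain ⟨h, hh⟩ := core_pow_mul (2 * m) div ⟨a, ha⟩ ⟨b, hb⟩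
    refine ⟨h.1, h.2, ?_⟩
    have := congrArg Subtype.val hh
    simpa using this
  -- commuting helper
  have hcent : ∀ x ∈ Subgroup.center G, ∀ g : G, Commute g x := by
    intro x hx g
    exact Subgroup.mem_center_iff.mp hx g
  refine ⟨{ carrier := {x : G | ∃ a ∈ A, ∃ d ∈ D₀, x = a ^ (2 * m) * d},
            one_mem' := ⟨1, Subgroup.one_mem A, 1, Subgroup.one_mem D₀, by simp⟩,
            mul_mem' := ?_, inv_mem' := ?_ }, rfl, ⟨?_⟩, ?_⟩
  · -- multiplication
    rintro x y ⟨a, ha, d, hd, rfl⟩ ⟨b, hb, e, he, rfl⟩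
    obtain ⟨c, hc, hce⟩ := hclosed a ha b hb
    refine ⟨c, hc, d * e, Subgroup.mul_mem _ hd he, ?_⟩
    have hdb : d * b ^ (2 * m) = b ^ (2 * m) * d :=
      (hcent d (hD₀c hd) (b ^ (2 * m))).symm.eq
    calc a ^ (2 * m) * d * (b ^ (2 * m) * e)
        = a ^ (2 * m) * (d * b ^ (2 * m)) * e := by group
      _ = a ^ (2 * m) * (b ^ (2 * m) * d) * e := by rw [hdb]
      _ = (a ^ (2 * m) * b ^ (2 * m)) * (d * e) := by group
      _ = c ^ (2 * m) * (d * e) := by rw [hce]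
  · -- inverses
    rintro x ⟨a, ha, d, hd, rfl⟩
    refine ⟨a⁻¹, Subgroup.inv_mem A ha, d⁻¹, Subgroup.inv_mem D₀ hd, ?_⟩
    have hdi : (a ^ (2 * m))⁻¹ * d⁻¹ = d⁻¹ * (a ^ (2 * m))⁻¹ :=
      ((hcent d (hD₀c hd) (a ^ (2 * m))).inv_inv).eq
    calc (a ^ (2 * m) * d)⁻¹ = d⁻¹ * (a ^ (2 * m))⁻¹ := by group
      _ = (a ^ (2 * m))⁻¹ * d⁻¹ := by rw [hdi]
      _ = (a⁻¹) ^ (2 * m) * d⁻¹ := by rw [inv_pow]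
  · -- normality
    rintro x ⟨a, ha, d, hd, rfl⟩ g
    refine ⟨g * a * g⁻¹, hA.conj_mem a ha g, d, hd, ?_⟩
    have hdg : d * g⁻¹ = g⁻¹ * d := ((hcent d (hD₀c hd) g⁻¹).symm).eq
    calc g * (a ^ (2 * m) * d) * g⁻¹
        = g * a ^ (2 * m) * (d * g⁻¹) := by group
      _ = g * a ^ (2 * m) * (g⁻¹ * d) := by rw [hdg]
      _ = (g * a ^ (2 * m) * g⁻¹) * d := by group
      _ = (g * a * g⁻¹) ^ (2 * m) * d := by rw [conj_pow]
  · -- divisibility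
    rintro x ⟨a, ha, d, hd, rfl⟩ k hk
    obtain ⟨b, hb, z, hz, hbk⟩ := hAdiv a ha k hk
    obtain ⟨d₁, hd₁, f₁, hf₁, hze⟩ := hsum z hz
    have hf2m : f₁ ^ (2 * m) = 1 := by
      rw [mul_comm 2 m, pow_mul, hF₀exp f₁ hf₁, one_pow]
    have hcdf : Commute d₁ f₁ := hcent f₁ (hF₀c hf₁) d₁
    have hz2m : z ^ (2 * m) = d₁ ^ (2 * m) := by
      rw [hze, hcdf.mul_pow, hf2m, mul_one]
    have htm : (d₁ ^ (2 * m))⁻¹ * d ∈ D₀ :=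
      Subgroup.mul_mem _ (Subgroup.inv_mem _ (Subgroup.pow_mem _ hd₁ _)) hd
    obtain ⟨e, he, hek⟩ := hD₀div _ htm k hk
    refine ⟨b ^ (2 * m) * e, ⟨b, hb, e, he, rfl⟩, ?_⟩
    have hcbe : Commute (b ^ (2 * m)) e := hcent e (hD₀c he) (b ^ (2 * m))
    have hcaz : Commute a z := hcent z hz a
    have hswap : (b ^ (2 * m)) ^ k = (b ^ k) ^ (2 * m) := by
      rw [← pow_mul, ← pow_mul, mul_comm]
    calc (b ^ (2 * m) * e) ^ k
        = (b ^ (2 * m)) ^ k * e ^ k := hcbe.mul_pow k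
      _ = (b ^ k) ^ (2 * m) * e ^ k := by rw [hswap]
      _ = (a * z) ^ (2 * m) * e ^ k := by rw [hbk]
      _ = a ^ (2 * m) * z ^ (2 * m) * e ^ k := by rw [hcaz.mul_pow]
      _ = a ^ (2 * m) * d₁ ^ (2 * m) * ((d₁ ^ (2 * m))⁻¹ * d) := by rw [hz2m, hek]
      _ = a ^ (2 * m) * d := by group
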